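/- (Stability of the optimal Type-II error under relaxation of the Type-I constraint, from the proof of Theorem 2) Let H be a convex class of measurable functions h : X → ℝ (for any θ ∈ (0,1) and h₁, h₂ ∈ H, θ·h₁ + (1−θ)·h₂ ∈ H), and let φ : ℝ → [0, ∞) be convex, non-decreasing, with φ(0) = 1 and max{φ(h(x)), φ(−h(x))} ≤ C for all h ∈ H, x ∈ X. Define γ(β) = inf{ R'_{φ,μ_{1,T}}(h) : h ∈ H, R_{φ,μ₀}(h) ≤ β }. Let α > 0 and ε₀ > 0, and suppose the set {h ∈ H : R_{φ,μ₀}(h) ≤ α/2} is nonempty. Then γ(α) − γ(α + ε₀) ≤ 2·C·ε₀/α. In particular, if h*_{T,α} and h*_{T,α+ε₀} are minimizers of R'_{φ,μ_{1,T}} over {h ∈ H : R_{φ,μ₀}(h) ≤ α} and {h ∈ H : R_{φ,μ₀}(h) ≤ α + ε₀} respectively, then R'_{φ,μ_{1,T}}(h*_{T,α}) − R'_{φ,μ_{1,T}}(h*_{T,α+ε₀}) ≤ 2·C·ε₀/α. -/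
import Mathlib


open MeasureTheory

/-- Surrogate Type-I error `R_{φ,μ}(h) = E_μ[φ(h(X))]`. -/
noncomputable def RpopI {X : Type*} [MeasurableSpace X] (φ : ℝ → ℝ) (μ : Measure X)
    (h : X → ℝ) : ℝ :=
  ∫ x, φ (h x) ∂μ

/-- Surrogate Type-II error `R'_{φ,μ}(h) = E_μ[φ(-h(X))]`. -/
noncomputable def RpopII {X : Type*} [MeasurableSpace X] (φ : ℝ → ℝ) (μ : Measure X)
    (h : X → ℝ) : ℝ :=
  ∫ x, φ (-h x) ∂μ

/-- Empirical surrogate Type-I error: the sample average of `φ (h ·)`. -/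
noncomputable def RempI {X : Type*} (φ : ℝ → ℝ) {n : ℕ} (xs : Fin n → X)
    (h : X → ℝ) : ℝ :=
  (1 / n : ℝ) * ∑ i, φ (h (xs i))

/-- Empirical surrogate Type-II error: the sample average of `φ (-h ·)`. -/
noncomputable def RempII {X : Type*} (φ : ℝ → ℝ) {n : ℕ} (xs : Fin n → X)
    (h : X → ℝ) : ℝ :=
  (1 / n : ℝ) * ∑ i, φ (-h (xs i))

/-- The optimal surrogate Type-II error curve
`γ(β) = inf { R'_{φ,μ₁T}(h) : h ∈ H, R_{φ,μ₀}(h) ≤ β }`. -/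
noncomputable def gammaCurve {X : Type*} [MeasurableSpace X] (H : Set (X → ℝ))
    (φ : ℝ → ℝ) (μ₀ μT : Measure X) (β : ℝ) : ℝ :=
  sInf (RpopII φ μT '' {h | h ∈ H ∧ RpopI φ μ₀ h ≤ β})

/-- from the proof of Theorem 2: for a convex class `H`, a convex
non-decreasing loss `φ ≥ 0` with `φ 0 = 1` bounded by `C` on `H`, if
`{h ∈ H : R_{φ,μ₀}(h) ≤ α/2}` is nonempty, then `γ(α) − γ(α + ε₀) ≤ 2·C·ε₀/α`; in
particular the corresponding constrained minimizers satisfy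
`R'_{φ,μ₁T}(h*_{T,α}) − R'_{φ,μ₁T}(h*_{T,α+ε₀}) ≤ 2·C·ε₀/α`. -/
theorem gammaCurve_relaxation_stability
    {X : Type*} [MeasurableSpace X]
    (H : Set (X → ℝ)) (hHmeas : ∀ h ∈ H, Measurable h)
    (hHconvex : ∀ θ : ℝ, θ ∈ Set.Ioo (0 : ℝ) 1 → ∀ h₁ ∈ H, ∀ h₂ ∈ H,
      (fun x => θ * h₁ x + (1 - θ) * h₂ x) ∈ H)
    (φ : ℝ → ℝ) (C : ℝ)
    (hφ_nonneg : ∀ t : ℝ, 0 ≤ φ t) (hφ_mono : Monotone φ) (hφ_zero : φ 0 = 1)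
    (hφ_convex : ConvexOn ℝ Set.univ φ)
    (μ₀ μT : Measure X) [IsProbabilityMeasure μ₀] [IsProbabilityMeasure μT]
    (hφ_bound : ∀ h ∈ H, ∀ x : X, max (φ (h x)) (φ (-h x)) ≤ C)
    (α ε₀ : ℝ) (hα : 0 < α) (hε₀ : 0 < ε₀)
    (hhalf : {h | h ∈ H ∧ RpopI φ μ₀ h ≤ α / 2}.Nonempty)
    -- the constrained minimizers h*_{T,α} and h*_{T,α+ε₀}
    (hTα : X → ℝ) (hTα_mem : hTα ∈ H) (hTα_feas : RpopI φ μ₀ hTα ≤ α)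
    (hTα_opt : ∀ h ∈ H, RpopI φ μ₀ h ≤ α → RpopII φ μT hTα ≤ RpopII φ μT h)
    (hTαε : X → ℝ) (hTαε_mem : hTαε ∈ H) (hTαε_feas : RpopI φ μ₀ hTαε ≤ α + ε₀)
    (hTαε_opt : ∀ h ∈ H, RpopI φ μ₀ h ≤ α + ε₀ → RpopII φ μT hTαε ≤ RpopII φ μT h) :
    gammaCurve H φ μ₀ μT α - gammaCurve H φ μ₀ μT (α + ε₀) ≤ 2 * C * ε₀ / α ∧
      RpopII φ μT hTα - RpopII φ μT hTαε ≤ 2 * C * ε₀ / α := by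
  classical
  obtain ⟨h₀, h₀_mem, h₀_feas⟩ := hhalf
  have hφmeas : Measurable φ := hφ_mono.measurable
  -- integrability of φ ∘ h and φ ∘ (-h) for h ∈ H, under any probability measure
  have hint : ∀ h ∈ H, ∀ (μ : Measure X), IsProbabilityMeasure μ →
      Integrable (fun x => φ (h x)) μ := by
    intro h hh μ _
    refine (integrable_const C).mono' ((hφmeas.comp (hHmeas h hh)).aestronglyMeasurable) ?_
    filter_upwards with x
    rw [Real.norm_eq_abs, abs_of_nonneg (hφ_nonneg _)]
    exact le_trans (le_max_left _ _) (hφ_bound h hh x)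
  have hintneg : ∀ h ∈ H, ∀ (μ : Measure X), IsProbabilityMeasure μ →
      Integrable (fun x => φ (-h x)) μ := by
    intro h hh μ _
    refine (integrable_const C).mono' ((hφmeas.comp (hHmeas h hh).neg).aestronglyMeasurable) ?_
    filter_upwards with x
    rw [Real.norm_eq_abs, abs_of_nonneg (hφ_nonneg _)]
    exact le_trans (le_max_right _ _) (hφ_bound h hh x)
  -- RpopII bounds
  have hII_le_C : ∀ h ∈ H, RpopII φ μT h ≤ C := by
    intro h hh
    have := integral_mono (hintneg h hh μT inferInstance) (integrable_const C)
      (fun x => le_trans (le_max_right _ _) (hφ_bound h hh x))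
    simpa [RpopII, integral_const] using this
  have hII_nonneg : ∀ h : X → ℝ, 0 ≤ RpopII φ μT h := fun h =>
    integral_nonneg (fun x => hφ_nonneg _)
  have hC : 0 ≤ C := le_trans (hII_nonneg h₀) (hII_le_C h₀ h₀_mem)
  -- the mixing parameter
  set θ : ℝ := 2 * ε₀ / (2 * ε₀ + α) with hθdef
  have hden : 0 < 2 * ε₀ + α := by linarith
  have hθ0 : 0 < θ := by positivity
  have hθ1 : θ < 1 := by
    rw [hθdef, div_lt_one hden]; linarith
  have hθIoo : θ ∈ Set.Ioo (0 : ℝ) 1 := ⟨hθ0, hθ1⟩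
  -- the mixture
  set g : X → ℝ := fun x => θ * h₀ x + (1 - θ) * hTαε x with hgdef
  have hg_mem : g ∈ H := hHconvex θ hθIoo h₀ h₀_mem hTαε hTαε_mem
  -- convexity pointwise bounds
  have hptI : ∀ x, φ (g x) ≤ θ * φ (h₀ x) + (1 - θ) * φ (hTαε x) := by
    intro x
    have := hφ_convex.2 (Set.mem_univ (h₀ x)) (Set.mem_univ (hTαε x))
      hθ0.le (by linarith : (0:ℝ) ≤ 1 - θ) (by ring)
    simpa [smul_eq_mul] using this
  have hptII : ∀ x, φ (-g x) ≤ θ * φ (-h₀ x) + (1 - θ) * φ (-hTαε x) := by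
    intro x
    have := hφ_convex.2 (Set.mem_univ (-h₀ x)) (Set.mem_univ (-hTαε x))
      hθ0.le (by linarith : (0:ℝ) ≤ 1 - θ) (by ring)
    have heq : -g x = θ * (-h₀ x) + (1 - θ) * (-hTαε x) := by simp [hgdef]; ring
    rw [heq]
    simpa [smul_eq_mul] using this
  -- feasibility of the mixture at level α
  have hgI : RpopI φ μ₀ g ≤ θ * RpopI φ μ₀ h₀ + (1 - θ) * RpopI φ μ₀ hTαε := by
    have h1 : Integrable (fun x => θ * φ (h₀ x) + (1 - θ) * φ (hTαε x)) μ₀ :=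
      ((hint h₀ h₀_mem μ₀ inferInstance).const_mul θ).add
        ((hint hTαε hTαε_mem μ₀ inferInstance).const_mul (1 - θ))
    have h2 := integral_mono (hint g hg_mem μ₀ inferInstance) h1 hptI
    have h3 : ∫ x, (θ * φ (h₀ x) + (1 - θ) * φ (hTαε x)) ∂μ₀
        = θ * RpopI φ μ₀ h₀ + (1 - θ) * RpopI φ μ₀ hTαε := by
      rw [integral_add ((hint h₀ h₀_mem μ₀ inferInstance).const_mul θ)
        ((hint hTαε hTαε_mem μ₀ inferInstance).const_mul (1 - θ)),
        integral_const_mul, integral_const_mul]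
      rfl
    calc RpopI φ μ₀ g ≤ _ := h2
      _ = _ := h3
  have hg_feas : RpopI φ μ₀ g ≤ α := by
    have hbound : θ * RpopI φ μ₀ h₀ + (1 - θ) * RpopI φ μ₀ hTαε
        ≤ θ * (α / 2) + (1 - θ) * (α + ε₀) := by
      have := mul_le_mul_of_nonneg_left h₀_feas hθ0.le
      have := mul_le_mul_of_nonneg_left hTαε_feas (by linarith : (0:ℝ) ≤ 1 - θ)
      linarith
    have hkey : θ * (α / 2) + (1 - θ) * (α + ε₀) ≤ α := by
      have : θ * (α / 2) + (1 - θ) * (α + ε₀) = α := by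
        rw [hθdef]; field_simp; ring
      linarith
    linarith
  -- RpopII of the mixture
  have hgII : RpopII φ μT g ≤ θ * RpopII φ μT h₀ + (1 - θ) * RpopII φ μT hTαε := by
    have h1 : Integrable (fun x => θ * φ (-h₀ x) + (1 - θ) * φ (-hTαε x)) μT :=
      ((hintneg h₀ h₀_mem μT inferInstance).const_mul θ).add
        ((hintneg hTαε hTαε_mem μT inferInstance).const_mul (1 - θ))
    have h2 := integral_mono (hintneg g hg_mem μT inferInstance) h1 hptII
    have h3 : ∫ x, (θ * φ (-h₀ x) + (1 - θ) * φ (-hTαε x)) ∂μT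
        = θ * RpopII φ μT h₀ + (1 - θ) * RpopII φ μT hTαε := by
      rw [integral_add ((hintneg h₀ h₀_mem μT inferInstance).const_mul θ)
        ((hintneg hTαε hTαε_mem μT inferInstance).const_mul (1 - θ)),
        integral_const_mul, integral_const_mul]
      rfl
    calc RpopII φ μT g ≤ _ := h2
      _ = _ := h3
  -- main inequality for minimizers
  have hmain : RpopII φ μT hTα - RpopII φ μT hTαε ≤ 2 * C * ε₀ / α := by
    have h1 : RpopII φ μT hTα ≤ RpopII φ μT g := hTα_opt g hg_mem hg_feas
    have h2 : RpopII φ μT h₀ ≤ C := hII_le_C h₀ h₀_mem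
    have h3 : 0 ≤ RpopII φ μT hTαε := hII_nonneg _
    have h4 : RpopII φ μT hTα - RpopII φ μT hTαε ≤ θ * C := by
      have : θ * RpopII φ μT h₀ + (1 - θ) * RpopII φ μT hTαε - RpopII φ μT hTαε
          = θ * (RpopII φ μT h₀ - RpopII φ μT hTαε) := by ring
      nlinarith [hθ0.le]
    have h5 : θ * C ≤ 2 * C * ε₀ / α := by
      rw [hθdef]
      rw [div_mul_eq_mul_div]
      rw [div_le_div_iff₀ hden hα]
      nlinarith [mul_nonneg (mul_nonneg hC hε₀.le) hε₀.le]
    linarith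
  constructor
  · -- identify gammaCurve values
    have hbdd : BddBelow (RpopII φ μT '' {h | h ∈ H ∧ RpopI φ μ₀ h ≤ α}) := by
      refine ⟨0, ?_⟩
      rintro y ⟨h, _, rfl⟩
      exact hII_nonneg h
    have hγα : gammaCurve H φ μ₀ μT α ≤ RpopII φ μT hTα :=
      csInf_le hbdd ⟨hTα, ⟨hTα_mem, hTα_feas⟩, rfl⟩
    have hγαε : RpopII φ μT hTαε ≤ gammaCurve H φ μ₀ μT (α + ε₀) := by
      rw [gammaCurve]
      have hne : (RpopII φ μT '' {h | h ∈ H ∧ RpopI φ μ₀ h ≤ α + ε₀}).Nonempty :=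
        ⟨RpopII φ μT hTαε, hTαε, ⟨hTαε_mem, hTαε_feas⟩, rfl⟩
      refine le_csInf hne ?_
      rintro y ⟨h, ⟨hh, hfeas⟩, rfl⟩
      exact hTαε_opt h hh hfeas
    linarith
  · exact hmain
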